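/- For positive reals γ₁ < γ₂, the quantity Φ(γ₁, γ₂) = 1/√(γ₂² - γ₁²) - (4/(π²(γ₂ + γ₁)))·K(√(2γ₁/(γ₂ + γ₁)))² is nonnegative, where K is the complete elliptic integral of the first kind. -/

import Mathlib

open Real intervalIntegral

/-- The complete elliptic integral of the first kind. -/
noncomputable def ellipticK (k : ℝ) : ℝ :=
  ∫ θ in (0:ℝ)..(π / 2), 1 / Real.sqrt (1 - k ^ 2 * (Real.sin θ) ^ 2)

lemma aux_pos (m : ℝ) (hm1 : m < 1) (θ : ℝ) (hm0 : 0 ≤ m) :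
    0 < 1 - m * Real.sin θ ^ 2 := by
  nlinarith [Real.sin_sq_le_one θ, sq_nonneg (Real.sin θ)]

lemma aux_cont (m : ℝ) (hm0 : 0 ≤ m) (hm1 : m < 1) :
    Continuous (fun θ : ℝ => 1 / (1 - m * Real.sin θ ^ 2)) := by
  apply continuous_const.div
  · continuity
  · exact fun θ => (aux_pos m hm1 θ hm0).ne'

lemma integral_one_div_one_sub_mul_sin_sq (m : ℝ) (hm0 : 0 ≤ m) (hm1 : m < 1) :
    ∫ θ in (0:ℝ)..(π/2), 1 / (1 - m * Real.sin θ ^ 2)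
      = π / (2 * Real.sqrt (1 - m)) := by
  set c : ℝ := Real.sqrt (1 - m) with hcdef
  have h1m : (0:ℝ) < 1 - m := by linarith
  have hc : 0 < c := Real.sqrt_pos.mpr h1m
  have hc2 : c ^ 2 = 1 - m := Real.sq_sqrt h1m.le
  set f : ℝ → ℝ := fun θ => 1 / (1 - m * Real.sin θ ^ 2) with hfdef
  have hf_cont : Continuous f := aux_cont m hm0 hm1
  set G : ℝ → ℝ := fun b => ∫ θ in (0:ℝ)..b, f θ with hGdef
  have hG_cont : Continuous G :=
    intervalIntegral.continuous_primitive (fun a b => hf_cont.intervalIntegrable a b) 0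
  -- FTC on [0, b] for b < π/2
  have key : ∀ b ∈ Set.Ico (0:ℝ) (π/2), G b = Real.arctan (c * Real.tan b) / c := by
    intro b hb
    have harctan0 : Real.arctan (c * Real.tan 0) / c = 0 := by
      simp [Real.tan_zero]
    show (∫ θ in (0:ℝ)..b, f θ) = _
    have := intervalIntegral.integral_eq_sub_of_hasDerivAt
      (f := fun θ => Real.arctan (c * Real.tan θ) / c) (f' := f) (a := 0) (b := b)
      ?_ (hf_cont.intervalIntegrable 0 b)
    · rw [this]; rw [harctan0, sub_zero]
    · intro x hx
      rw [Set.uIcc_of_le hb.1] at hx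
      have hxlt : x < π / 2 := lt_of_le_of_lt hx.2 hb.2
      have hcos : 0 < Real.cos x := Real.cos_pos_of_mem_Ioo
        ⟨by linarith [Real.pi_pos, hx.1], hxlt⟩
      have ht := (Real.hasDerivAt_tan hcos.ne').const_mul c
      have ha := (Real.hasDerivAt_arctan (c * Real.tan x)).comp x ht
      have hd := ha.div_const c
      convert hd using 1
      · rfl
      · rfl
      have hsc : Real.sin x ^ 2 + Real.cos x ^ 2 = 1 := Real.sin_sq_add_cos_sq x
      rw [hfdef]
      simp only [Function.comp]
      rw [Real.tan_eq_sin_div_cos]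
      have hpos := aux_pos m hm1 x hm0
      field_simp
      linear_combination (Real.sin x ^ 2) * hc2 + hsc
  -- take limits along 𝓝[<] (π/2)
  have hmem : Set.Ioo (0:ℝ) (π/2) ∈ nhdsWithin (π/2) (Set.Iio (π/2)) :=
    Ioo_mem_nhdsLT_of_mem ⟨by positivity, le_refl _⟩
  have hEq : (fun b => Real.arctan (c * Real.tan b) / c) =ᶠ[nhdsWithin (π/2) (Set.Iio (π/2))] G := by
    filter_upwards [hmem] with b hb
    exact (key b ⟨hb.1.le, hb.2⟩).symm
  have T1 : Filter.Tendsto G (nhdsWithin (π/2) (Set.Iio (π/2))) (nhds (G (π/2))) :=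
    (hG_cont.tendsto _).mono_left nhdsWithin_le_nhds
  have T2 : Filter.Tendsto (fun b => Real.arctan (c * Real.tan b) / c)
      (nhdsWithin (π/2) (Set.Iio (π/2))) (nhds (π / 2 / c)) := by
    have h1 : Filter.Tendsto (fun b => c * Real.tan b)
        (nhdsWithin (π/2) (Set.Iio (π/2))) Filter.atTop :=
      (Real.tendsto_tan_pi_div_two).const_mul_atTop hc
    have h2 : Filter.Tendsto (fun b => Real.arctan (c * Real.tan b))
        (nhdsWithin (π/2) (Set.Iio (π/2))) (nhds (π/2)) :=
      ((Real.tendsto_arctan_atTop.mono_right nhdsWithin_le_nhds).comp h1)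
    exact h2.div_const c
  have heq2 : G (π/2) = π / 2 / c :=
    tendsto_nhds_unique T1 (T2.congr' hEq)
  show G (π/2) = π / (2 * c)
  rw [heq2, div_div]

lemma cs_integral (f : ℝ → ℝ) (a b : ℝ) (hab : a ≤ b) (hf : Continuous f) :
    (∫ x in a..b, f x) ^ 2 ≤ (b - a) * ∫ x in a..b, f x ^ 2 := by
  rcases eq_or_lt_of_le hab with rfl | hlt
  · simp
  set I := ∫ x in a..b, f x with hI
  set c : ℝ := I / (b - a) with hc
  have hba : (0:ℝ) < b - a := by linarith
  have hfi : IntervalIntegrable f MeasureTheory.volume a b := hf.intervalIntegrable a b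
  have hf2i : IntervalIntegrable (fun x => f x ^ 2) MeasureTheory.volume a b :=
    (hf.pow 2).intervalIntegrable a b
  have h0 : 0 ≤ ∫ x in a..b, (f x - c) ^ 2 :=
    intervalIntegral.integral_nonneg hab (fun x _ => sq_nonneg _)
  have expand : (fun x => (f x - c) ^ 2) = fun x => (f x ^ 2 - 2 * c * f x) + c ^ 2 := by
    funext x; ring
  rw [expand, intervalIntegral.integral_add (hf2i.sub ((hfi.const_mul (2*c)))) 
      intervalIntegrable_const,
    intervalIntegral.integral_sub hf2i (hfi.const_mul (2*c)),
    intervalIntegral.integral_const_mul, intervalIntegral.integral_const] at h0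
  simp only [smul_eq_mul, ← hI] at h0
  have h1 : 0 ≤ (∫ x in a..b, f x ^ 2) - 2 * (I / (b - a)) * I + (b - a) * (I / (b-a))^2 := by
    rw [hc] at h0; linarith
  have h2 : (b - a) * (I / (b-a))^2 = I^2 / (b - a) := by
    field_simp
  have h3 : 2 * (I / (b - a)) * I = 2 * I^2 / (b - a) := by
    field_simp
  rw [h2, h3] at h1
  have h4 : I ^ 2 / (b - a) ≤ ∫ x in a..b, f x ^ 2 := by
    have : 2 * I ^ 2 / (b - a) - I ^ 2 / (b - a) = I ^ 2 / (b - a) := by ring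
    linarith
  calc I ^ 2 = (I ^ 2 / (b - a)) * (b - a) := by field_simp
  _ ≤ (∫ x in a..b, f x ^ 2) * (b - a) := by
      exact mul_le_mul_of_nonneg_right h4 hba.le
  _ = (b - a) * ∫ x in a..b, f x ^ 2 := by ring

lemma ellipticK_sq_le (k : ℝ) (hk1 : k ^ 2 < 1) :
    ellipticK k ^ 2 ≤ π ^ 2 / (4 * Real.sqrt (1 - k ^ 2)) := by
  set m := k ^ 2 with hm
  have hm0 : 0 ≤ m := sq_nonneg k
  set g : ℝ → ℝ := fun θ => 1 / Real.sqrt (1 - m * Real.sin θ ^ 2) with hg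
  have hpos : ∀ θ, 0 < 1 - m * Real.sin θ ^ 2 := fun θ => aux_pos m hk1 θ hm0
  have hg_cont : Continuous g := by
    apply continuous_const.div
    · exact Real.continuous_sqrt.comp (by continuity)
    · exact fun θ => (Real.sqrt_pos.mpr (hpos θ)).ne'
  have hsq : ∀ θ, g θ ^ 2 = 1 / (1 - m * Real.sin θ ^ 2) := by
    intro θ
    rw [hg]; simp only []
    rw [div_pow, one_pow, Real.sq_sqrt (hpos θ).le]
  have hcs := cs_integral g 0 (π/2) (by positivity) hg_cont
  have hKdef : ellipticK k = ∫ θ in (0:ℝ)..(π/2), g θ := rfl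
  have hint2 : (∫ θ in (0:ℝ)..(π/2), g θ ^ 2) = π / (2 * Real.sqrt (1 - m)) := by
    rw [intervalIntegral.integral_congr (fun θ _ => hsq θ)]
    exact integral_one_div_one_sub_mul_sin_sq m hm0 hk1
  rw [hKdef]
  calc (∫ θ in (0:ℝ)..(π/2), g θ) ^ 2
      ≤ (π/2 - 0) * ∫ θ in (0:ℝ)..(π/2), g θ ^ 2 := hcs
    _ = (π/2) * (π / (2 * Real.sqrt (1 - m))) := by rw [hint2]; ring_nf
    _ = π ^ 2 / (4 * Real.sqrt (1 - m)) := by ring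

theorem stmt_17 (γ₁ γ₂ : ℝ) (h0 : 0 < γ₁) (h12 : γ₁ < γ₂) :
    0 ≤ 1 / Real.sqrt (γ₂ ^ 2 - γ₁ ^ 2)
      - (4 / (π ^ 2 * (γ₂ + γ₁))) * ellipticK (Real.sqrt (2 * γ₁ / (γ₂ + γ₁))) ^ 2 := by
  have hs : 0 < γ₂ + γ₁ := by linarith
  have hd : 0 < γ₂ - γ₁ := by linarith
  set k := Real.sqrt (2 * γ₁ / (γ₂ + γ₁)) with hk
  have hk2 : k ^ 2 = 2 * γ₁ / (γ₂ + γ₁) := Real.sq_sqrt (by positivity)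
  have hk1 : k ^ 2 < 1 := by rw [hk2, div_lt_one hs]; linarith
  have h1k : 1 - k ^ 2 = (γ₂ - γ₁) / (γ₂ + γ₁) := by
    rw [hk2]; field_simp; ring
  have hK := ellipticK_sq_le k hk1
  rw [h1k, Real.sqrt_div hd.le] at hK
  have ha : 0 < Real.sqrt (γ₂ + γ₁) := Real.sqrt_pos.mpr hs
  have hb : 0 < Real.sqrt (γ₂ - γ₁) := Real.sqrt_pos.mpr hd
  have ha2 : Real.sqrt (γ₂ + γ₁) ^ 2 = γ₂ + γ₁ := Real.sq_sqrt hs.le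
  have hsq : Real.sqrt (γ₂ ^ 2 - γ₁ ^ 2) = Real.sqrt (γ₂ + γ₁) * Real.sqrt (γ₂ - γ₁) := by
    rw [← Real.sqrt_mul hs.le]; congr 1; ring
  have hπ : (0:ℝ) < π := Real.pi_pos
  have hc : (0:ℝ) < 4 / (π ^ 2 * (γ₂ + γ₁)) := by positivity
  have hmul := mul_le_mul_of_nonneg_left hK hc.le
  have heq : 4 / (π ^ 2 * (γ₂ + γ₁))
      * (π ^ 2 / (4 * (Real.sqrt (γ₂ - γ₁) / Real.sqrt (γ₂ + γ₁))))
      = 1 / Real.sqrt (γ₂ ^ 2 - γ₁ ^ 2) := by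
    rw [hsq, ← ha2]
    field_simp
    rw [ha2, ha2]
  rw [heq] at hmul
  linarith
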